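/- For a ∈ [2, 24] and Y ∈ [0, 1/2], define f_n(a, Y) = (π(n - Y)⁵ - (5/a)(n - Y)³ - (1/4)(n - Y))·exp(-aπ(n - Y)²). Then for every integer n ≥ 2, f_n(a, Y) ≥ 0 and f_{-n}(a, Y) ≤ 0. -/
import Mathlib

lemma fn_key (a x : ℝ) (ha0 : 0 < a) (h5a : 5/a ≤ 5/2) (hx : 3/2 ≤ x) :
    0 ≤ Real.pi * x^5 - 5/a * x^3 - 1/4 * x := by
  have hpi := Real.pi_gt_three
  have hx0 : (0:ℝ) ≤ x := by linarith
  have hx2 : (9:ℝ)/4 ≤ x^2 := by nlinarith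
  have h1 : (5/a) * x^3 ≤ (5/2) * x^3 := by
    apply mul_le_mul_of_nonneg_right h5a (by positivity)
  nlinarith [mul_le_mul_of_nonneg_right hx2 (by positivity : (0:ℝ) ≤ x^3),
    mul_le_mul_of_nonneg_right hx2 hx0,
    mul_le_mul_of_nonneg_right hpi.le (by positivity : (0:ℝ) ≤ x^5)]

theorem fn_sign (a Y : ℝ) (ha1 : 2 ≤ a) (ha2 : a ≤ 24)
    (hY1 : 0 ≤ Y) (hY2 : Y ≤ 1/2) (n : ℤ) (hn : 2 ≤ n) :
    0 ≤ (Real.pi * ((n : ℝ) - Y)^5 - (5 / a) * ((n : ℝ) - Y)^3 - (1/4) * ((n : ℝ) - Y)) *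
        Real.exp (-a * Real.pi * ((n : ℝ) - Y)^2) ∧
    (Real.pi * (((-n : ℤ) : ℝ) - Y)^5 - (5 / a) * (((-n : ℤ) : ℝ) - Y)^3 -
        (1/4) * (((-n : ℤ) : ℝ) - Y)) *
      Real.exp (-a * Real.pi * (((-n : ℤ) : ℝ) - Y)^2) ≤ 0 := by
  have hn' : (2:ℝ) ≤ (n:ℝ) := by exact_mod_cast hn
  have ha0 : (0:ℝ) < a := by linarith
  have h5a : 5/a ≤ 5/2 := by
    rw [div_le_div_iff₀ ha0 (by norm_num)]; linarith
  push_cast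
  constructor
  · exact mul_nonneg (fn_key a _ ha0 h5a (by linarith)) (Real.exp_pos _).le
  · apply mul_nonpos_of_nonpos_of_nonneg _ (Real.exp_pos _).le
    have h := fn_key a ((n:ℝ) + Y) ha0 h5a (by linarith)
    nlinarith [h]
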